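/- For the M/G/∞ queue with service distribution G₁(t) = e^{-ρ}/(e^{-ρ} + (1-e^{-ρ})e^{-λt}) for t ≥ 0 (with λ > 0, ρ > 0), the peakedness p = B̄(1/α) equals (ρ+1)/(e^ρ + ρ), where α = ρ/λ. -/

import Mathlib

open Real MeasureTheory Set

lemma aux_exp_int (b : ℝ) (hb : 0 < b) : (∫ t in Ioi (0:ℝ), Real.exp (-(b*t))) = 1/b := by
  have := MeasureTheory.integral_comp_mul_left_Ioi (fun x => Real.exp (-x)) 0 hb
  simp only [mul_zero] at this
  rw [integral_exp_neg_Ioi_zero] at this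
  simpa [smul_eq_mul, one_div] using this

lemma aux_exp_int2 (b lam k c : ℝ) (hb : 0 < b) (hl : 0 < lam) :
    (∫ t in Ioi (0:ℝ), (k * Real.exp (-(b*t)) + c * Real.exp (-((b+lam)*t))))
      = k*(1/b) + c*(1/(b+lam)) := by
  have hbl : (0:ℝ) < b + lam := by linarith
  have hint1 : IntegrableOn (fun t => k * Real.exp (-(b*t))) (Ioi (0:ℝ)) := by
    simpa only [neg_mul, IntegrableOn] using Integrable.const_mul (exp_neg_integrableOn_Ioi 0 hb) k
  have hint2 : IntegrableOn (fun t => c * Real.exp (-((b+lam)*t))) (Ioi (0:ℝ)) := by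
    simpa only [neg_mul, IntegrableOn] using Integrable.const_mul (exp_neg_integrableOn_Ioi 0 hbl) c
  rw [integral_add hint1 hint2, integral_const_mul, integral_const_mul,
    aux_exp_int b hb, aux_exp_int (b+lam) hbl]

lemma aux_inner_int (lam ρ : ℝ) (hlam : 0 < lam) (hρ : 0 < ρ) (t : ℝ) :
    (∫ v in (0:ℝ)..t,
        (1 - Real.exp (-ρ) / (Real.exp (-ρ) + (1 - Real.exp (-ρ)) * Real.exp (-(lam * v)))))
      = -(1/lam) * Real.log (Real.exp (-ρ) + (1 - Real.exp (-ρ)) * Real.exp (-(lam * t))) := by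
  set c := 1 - Real.exp (-ρ) with hc
  have hcpos : 0 < c := by
    have : Real.exp (-ρ) < 1 := by
      rw [Real.exp_lt_one_iff]; linarith
    simp [hc]; linarith
  have hD : ∀ v : ℝ, 0 < Real.exp (-ρ) + c * Real.exp (-(lam * v)) := by
    intro v; positivity
  have hderiv : ∀ v : ℝ, HasDerivAt
      (fun v => -(1/lam) * Real.log (Real.exp (-ρ) + c * Real.exp (-(lam * v))))
      (1 - Real.exp (-ρ) / (Real.exp (-ρ) + c * Real.exp (-(lam * v)))) v := by
    intro v
    have h1 : HasDerivAt (fun v : ℝ => Real.exp (-ρ) + c * Real.exp (-(lam * v)))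
        (c * (Real.exp (-(lam * v)) * (-lam))) v := by
      have : HasDerivAt (fun v : ℝ => -(lam * v)) (-lam) v := by
        simpa [Pi.neg_def] using ((hasDerivAt_id v).const_mul lam).neg
      simpa [mul_comm] using ((this.exp).const_mul c).const_add (Real.exp (-ρ))
    have h2 := (h1.log (hD v).ne')
    have h3 := h2.const_mul (-(1/lam))
    refine h3.congr_deriv ?_
    have hd := (hD v).ne'
    field_simp
    ring
  have hcont : Continuous (fun v : ℝ =>
      1 - Real.exp (-ρ) / (Real.exp (-ρ) + c * Real.exp (-(lam * v)))) := by
    apply Continuous.sub continuous_const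
    exact continuous_const.div (by continuity) (fun v => (hD v).ne')
  rw [intervalIntegral.integral_eq_sub_of_hasDerivAt (fun v _ => hderiv v)
    (hcont.intervalIntegrable 0 t)]
  simp [hc]

/-- For the M/G/∞ queue with service distribution
`G₁(t) = e^{-ρ}/(e^{-ρ} + (1-e^{-ρ})e^{-λt})`, the peakedness `p = B̄(1/α)`
equals `(ρ+1)/(e^ρ + ρ)`, where `α = ρ/λ`. -/
theorem stmt_0 (lam ρ α : ℝ) (hlam : 0 < lam) (hρ : 0 < ρ) (hα : α = ρ / lam) :
    1 + 1 / ρ -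
      1 / (lam * ∫ t in Ioi (0:ℝ), Real.exp (-(t / α) -
        lam * ∫ v in (0:ℝ)..t,
          (1 - Real.exp (-ρ) / (Real.exp (-ρ) + (1 - Real.exp (-ρ)) * Real.exp (-(lam * v)))))) =
    (ρ + 1) / (Real.exp ρ + ρ) := by
  set c := 1 - Real.exp (-ρ) with hc
  have hcpos : 0 < c := by
    have : Real.exp (-ρ) < 1 := by rw [Real.exp_lt_one_iff]; linarith
    simp only [hc]; linarith
  have hD : ∀ v : ℝ, 0 < Real.exp (-ρ) + c * Real.exp (-(lam * v)) := fun v => by positivity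
  set b := lam / ρ with hb
  have hbpos : 0 < b := by positivity
  have hpt : ∀ t : ℝ, Real.exp (-(t / α) -
        lam * ∫ v in (0:ℝ)..t,
          (1 - Real.exp (-ρ) / (Real.exp (-ρ) + c * Real.exp (-(lam * v)))))
      = Real.exp (-ρ) * Real.exp (-(b*t)) + c * Real.exp (-((b+lam)*t)) := by
    intro t
    rw [hc, aux_inner_int lam ρ hlam hρ t, ← hc]
    have hl : lam * (-(1/lam) * Real.log (Real.exp (-ρ) + c * Real.exp (-(lam * t))))
        = - Real.log (Real.exp (-ρ) + c * Real.exp (-(lam * t))) := by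
      field_simp
    rw [hl]
    have htα : -(t / α) = -(b*t) := by
      rw [hα, hb, div_div_eq_mul_div]; ring
    rw [sub_neg_eq_add, htα, Real.exp_add, Real.exp_log (hD t)]
    rw [mul_add]
    congr 1
    · ring
    · rw [mul_left_comm, ← Real.exp_add]; congr 2; ring
  rw [integral_congr_ae (Filter.Eventually.of_forall (fun t => hpt t))]
  rw [aux_exp_int2 b lam (Real.exp (-ρ)) c hbpos hlam]
  have hbig : lam * (Real.exp (-ρ) * (1/b) + c * (1/(b+lam)))
      = ρ * (ρ * Real.exp (-ρ) + 1) / (ρ + 1) := by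
    rw [hb, hc]
    field_simp
    ring
  rw [hbig]
  have hE : 0 < Real.exp ρ := Real.exp_pos ρ
  rw [Real.exp_neg]
  have hA : 0 < ρ * (Real.exp ρ)⁻¹ + 1 := by positivity
  have h2 : Real.exp ρ + ρ ≠ 0 := by positivity
  rw [div_div_eq_mul_div, one_mul]
  field_simp
  ring
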